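/- Fenwick update correctness: let n be a power of two, A : Fin (n+1) → ℤ, and F the Fenwick array of A (F k = sum of A over (k - 2^(rmb k), k]). Fix 1 ≤ i ≤ n and Δ : ℤ, and let A' agree with A except A' i = A i + Δ. Let F' be obtained from F by adding Δ at every index in the update sequence of i that is ≤ n (u 0 = i, u (j+1) = u j + 2^(rmb (u j)), stopping at 2n). Then F' is the Fenwick array of A'. -/

import Mathlib

/-- Position of the least significant set bit of a positive natural. -/
def rmb (i : ℕ) : ℕ := padicValNat 2 i

/-- Number of 1-bits in the binary representation. -/
def popcount (i : ℕ) : ℕ := (Nat.bits i).count true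

/-- One step of the sum sequence: clear the lowest set bit. -/
def sumStep (x : ℕ) : ℕ := x - 2 ^ rmb x

/-- The sum sequence of `i`. -/
def sumSeq (i j : ℕ) : ℕ := sumStep^[j] i

/-- One step of the update sequence. -/
def updStep (x : ℕ) : ℕ := x + 2 ^ rmb x

/-- The update sequence of `i`. -/
def updSeq (i j : ℕ) : ℕ := updStep^[j] i

/-- The Fenwick array of `A`: entry `k` sums `A` over `(k - 2^(rmb k), k]`. -/
def fenwick (A : ℕ → ℤ) (k : ℕ) : ℤ := ∑ m ∈ Finset.Ioc (k - 2 ^ rmb k) k, A m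

private instance : Fact (Nat.Prime 2) := ⟨Nat.prime_two⟩

lemma rmb_mul_odd (s m : ℕ) (hm : Odd m) : rmb (2 ^ s * m) = s := by
  have hm2 := Nat.odd_iff.mp hm
  have hm0 : m ≠ 0 := by omega
  have h0 : padicValNat 2 m = 0 := by
    refine padicValNat.eq_zero_of_not_dvd ?_
    rintro ⟨t, ht⟩; omega
  unfold rmb
  rw [padicValNat.mul (by positivity) hm0, padicValNat.prime_pow, h0]
  omega

lemma rmb_decomp (x : ℕ) (hx : 0 < x) : ∃ m, Odd m ∧ x = 2 ^ rmb x * m := by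
  obtain ⟨m, hm⟩ := (pow_padicValNat_dvd : 2 ^ padicValNat 2 x ∣ x)
  set v := padicValNat 2 x with hv
  refine ⟨m, ?_, hm⟩
  rcases Nat.even_or_odd m with he | ho
  · exfalso
    obtain ⟨t, ht⟩ := he
    have hd : 2 ^ (v + 1) ∣ x := ⟨t, by rw [hm, ht, pow_succ]; ring⟩
    have := (padicValNat_dvd_iff_le (p := 2) hx.ne').mp hd
    omega
  · exact ho

lemma two_pow_rmb_le (x : ℕ) (hx : 0 < x) : 2 ^ rmb x ≤ x :=
  Nat.le_of_dvd hx pow_padicValNat_dvd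

lemma rmb_lt_rmb_updStep (x : ℕ) (hx : 0 < x) : rmb x < rmb (updStep x) := by
  obtain ⟨m, hm, hxe⟩ := rmb_decomp x hx
  obtain ⟨t, ht⟩ := hm
  set r := rmb x with hr
  have hpos : 0 < updStep x := by
    unfold updStep
    have := Nat.one_le_two_pow (n := rmb x)
    omega
  have hd : 2 ^ (r + 1) ∣ updStep x := by
    refine ⟨t + 1, ?_⟩
    show x + 2 ^ r = 2 ^ (r + 1) * (t + 1)
    rw [hxe, ht, pow_succ]; ring
  have := (padicValNat_dvd_iff_le (p := 2) hpos.ne').mp hd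
  unfold rmb at this ⊢
  omega

lemma updSeq_invariant (i : ℕ) (h1 : 1 ≤ i) (j : ℕ) :
    0 < updSeq i j ∧ updSeq i j - 2 ^ rmb (updSeq i j) < i ∧ i ≤ updSeq i j := by
  induction j with
  | zero =>
    have := Nat.one_le_two_pow (n := rmb i)
    simp only [updSeq, Function.iterate_zero, id]
    omega
  | succ j ih =>
    obtain ⟨hpos, hlt, hle⟩ := ih
    have hstep : updSeq i (j + 1) = updStep (updSeq i j) :=
      Function.iterate_succ_apply' updStep j i
    set x := updSeq i j with hx
    set y := updStep x with hy
    have hyx : y = x + 2 ^ rmb x := rfl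
    have hr : rmb x < rmb y := rmb_lt_rmb_updStep x hpos
    have h2 : 2 ^ rmb x * 2 ≤ 2 ^ rmb y := by
      calc 2 ^ rmb x * 2 = 2 ^ (rmb x + 1) := by ring
        _ ≤ 2 ^ rmb y := Nat.pow_le_pow_right (by norm_num) (by omega)
    have h2le : 2 ^ rmb y ≤ y := two_pow_rmb_le y (by omega)
    rw [hstep]
    omega

lemma rmb_sub_pow (k s : ℕ) (hk : 0 < k) (hs : s < rmb k) : rmb (k - 2 ^ s) = s := by
  obtain ⟨m, hm, hke⟩ := rmb_decomp k hk
  obtain ⟨t, ht⟩ := hm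
  set r := rmb k with hr
  obtain ⟨u, hu⟩ : ∃ u, r - s = u + 1 := ⟨r - s - 1, by omega⟩
  have hkb : k = 2 ^ s * (2 ^ (u + 1) * m) := by
    rw [hke, show r = s + (u + 1) by omega, pow_add]; ring
  have hb : 0 < 2 ^ (u + 1) * m :=
    Nat.mul_pos (Nat.pow_pos (by norm_num)) (by omega)
  obtain ⟨c, hc⟩ : ∃ c, 2 ^ (u + 1) * m = c + 1 :=
    ⟨2 ^ (u + 1) * m - 1, by omega⟩
  have hkc : k = 2 ^ s * c + 2 ^ s := by rw [hkb, hc]; ring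
  have h1 : k - 2 ^ s = 2 ^ s * c := by omega
  have heven : 2 ^ (u + 1) * m = 2 * (2 ^ u * m) := by
    rw [pow_succ]; ring
  have hcodd : Odd c := Nat.odd_iff.mpr (by omega)
  rw [h1]
  exact rmb_mul_odd s c hcodd

lemma mem_updSeq_of_mem_interval (i : ℕ) (h1 : 1 ≤ i) :
    ∀ k, i ≤ k → k - 2 ^ rmb k < i → ∃ j, updSeq i j = k := by
  intro k
  induction k using Nat.strong_induction_on with
  | _ k ih =>
    intro hik hki
    rcases eq_or_lt_of_le hik with rfl | hlt
    · exact ⟨0, rfl⟩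
    · have hk0 : 0 < k := by omega
      set d := k - i with hd
      have hd1 : 1 ≤ d := by omega
      have hdlt : d < 2 ^ rmb k := by omega
      set s := Nat.log 2 d with hs
      have hsle : 2 ^ s ≤ d := Nat.pow_log_le_self 2 (by omega)
      have hslt : d < 2 ^ (s + 1) := Nat.lt_pow_succ_log_self (by norm_num) d
      have hsr : s < rmb k := by
        by_contra h
        have : 2 ^ rmb k ≤ 2 ^ s := Nat.pow_le_pow_right (by norm_num) (by omega)
        omega
      set y := k - 2 ^ s with hy
      have hrmby : rmb y = s := rmb_sub_pow k s hk0 hsr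
      have hp0 : 0 < 2 ^ s := Nat.pow_pos (by norm_num)
      have hylt : y < k := by omega
      have hiy : i ≤ y := by omega
      have hyint : y - 2 ^ rmb y < i := by
        rw [hrmby]
        have h2s : 2 ^ (s + 1) = 2 ^ s + 2 ^ s := by ring
        omega
      obtain ⟨j, hj⟩ := ih y hylt hiy hyint
      refine ⟨j + 1, ?_⟩
      have hstep : updSeq i (j + 1) = updStep (updSeq i j) :=
        Function.iterate_succ_apply' updStep j i
      rw [hstep, hj]
      show y + 2 ^ rmb y = k
      rw [hrmby]
      omega

lemma updSeq_iff (i : ℕ) (h1 : 1 ≤ i) (k : ℕ) :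
    (∃ j, updSeq i j = k) ↔ (k - 2 ^ rmb k < i ∧ i ≤ k) := by
  constructor
  · rintro ⟨j, rfl⟩
    have := updSeq_invariant i h1 j
    exact ⟨this.2.1, this.2.2⟩
  · rintro ⟨ha, hb⟩
    exact mem_updSeq_of_mem_interval i h1 k hb ha

open scoped Classical in
theorem fenwick_update_correct (n i : ℕ) (hn : ∃ h, n = 2 ^ h)
    (h1 : 1 ≤ i) (h2 : i ≤ n) (Δ : ℤ) (A A' : ℕ → ℤ)
    (hA'i : A' i = A i + Δ) (hA' : ∀ k, k ≠ i → A' k = A k)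
    (F' : ℕ → ℤ)
    (hF' : ∀ k, F' k = fenwick A k + if (∃ j, updSeq i j = k ∧ k ≤ n) then Δ else 0) :
    ∀ k, 1 ≤ k → k ≤ n → F' k = fenwick A' k := by
  intro k hk1 hkn
  rw [hF' k]
  have hA'eq : ∀ m, A' m = A m + if m = i then Δ else 0 := by
    intro m
    by_cases h : m = i
    · subst h; simp [hA'i]
    · simp [h, hA' m h]
  have hsum : fenwick A' k = fenwick A k +
      if i ∈ Finset.Ioc (k - 2 ^ rmb k) k then Δ else 0 := by
    unfold fenwick
    rw [Finset.sum_congr rfl (fun m _ => hA'eq m), Finset.sum_add_distrib,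
      Finset.sum_ite_eq' _ i (fun _ => Δ)]
  rw [hsum]
  congr 1
  have hiff : (∃ j, updSeq i j = k ∧ k ≤ n) ↔ i ∈ Finset.Ioc (k - 2 ^ rmb k) k := by
    rw [Finset.mem_Ioc]
    constructor
    · rintro ⟨j, hj, -⟩
      have := (updSeq_iff i h1 k).mp ⟨j, hj⟩
      omega
    · intro h
      obtain ⟨j, hj⟩ := (updSeq_iff i h1 k).mpr ⟨by omega, h.2⟩
      exact ⟨j, hj, hkn⟩
  by_cases h : ∃ j, updSeq i j = k ∧ k ≤ n
  · rw [if_pos h, if_pos (hiff.mp h)]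
  · rw [if_neg h, if_neg (fun hc => h (hiff.mpr hc))]
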